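/- Let $\Lambda_1,\dots,\Lambda_d\subset\mathbb{P}^n$ be $(k-1)$-planes satisfying $\mathrm{SP}(n-k)$, let $1\le r\le d-2$, and let $p_{r+1}\in\Lambda_{r+1},\dots,p_{d-1}\in\Lambda_{d-1}$ be points such that the linear span $\mathrm{Span}(p_{r+1},\dots,p_{d-1})$ is disjoint from $\Lambda_d$. Then $\Lambda_d\subseteq\mathrm{Span}(\Lambda_1,\dots,\Lambda_r,p_{r+1},\dots,p_{d-1})$. -/

import Mathlib

def SP {V : Type*} [AddCommGroup V] [Module ℂ V]
    (c : ℕ) (s : Finset ℕ) (Λ : ℕ → Submodule ℂ V) : Prop :=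
  ∀ j ∈ s, ∀ L : Submodule ℂ V, Module.finrank ℂ L = c + 1 →
    (∀ i ∈ s, i ≠ j → L ⊓ Λ i ≠ ⊥) → L ⊓ Λ j ≠ ⊥

open Submodule

/-- Extend a subspace `Y` disjoint from `Z` to a complement of `Z`. -/
lemma exists_compl_ext {V : Type*} [AddCommGroup V] [Module ℂ V] [FiniteDimensional ℂ V]
    (Y Z : Submodule ℂ V) (h : Y ⊓ Z = ⊥) : ∃ C, Y ≤ C ∧ IsCompl C Z := by
  obtain ⟨D, hD⟩ := Submodule.exists_isCompl (Y ⊔ Z)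
  refine ⟨Y ⊔ D, le_sup_left, ?_, ?_⟩
  · rw [disjoint_def]
    intro x hx hxZ
    obtain ⟨y, hy, dv, hdv, rfl⟩ := Submodule.mem_sup.mp hx
    have hdv0 : dv = 0 := by
      have h1 : dv ∈ (Y ⊔ Z) ⊓ D := by
        refine ⟨?_, hdv⟩
        have hdvr : dv = (y + dv) - y := by abel
        rw [hdvr]
        exact sub_mem (Submodule.mem_sup_right hxZ) (Submodule.mem_sup_left hy)
      rw [disjoint_iff.mp hD.disjoint] at h1
      exact h1
    subst hdv0
    rw [add_zero] at hxZ ⊢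
    have : y ∈ Y ⊓ Z := ⟨hy, hxZ⟩
    rw [h] at this
    exact this
  · rw [codisjoint_iff]
    have hD2 := codisjoint_iff.mp hD.codisjoint
    rw [← hD2, sup_assoc, sup_comm D Z, ← sup_assoc]

/-- Key step: if `Λd` is not contained in `Y ⊔ Λ`, pick a nonzero point of `Λ`
keeping the span disjoint from `Λd`. -/
lemma key_step {V : Type*} [AddCommGroup V] [Module ℂ V] [FiniteDimensional ℂ V]
    (Y L Λd : Submodule ℂ V) (hY : Y ⊓ Λd = ⊥)
    (hfin : Module.finrank ℂ L = Module.finrank ℂ Λd)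
    (hn : ¬ Λd ≤ Y ⊔ L) :
    ∃ x ∈ L, x ≠ 0 ∧ (Y ⊔ Submodule.span ℂ {x}) ⊓ Λd = ⊥ := by
  by_contra hbad
  push_neg at hbad
  -- For every nonzero x ∈ L we get a decomposition witness
  have hwit : ∀ x ∈ L, x ≠ 0 → ∃ w y a, w ∈ Λd ∧ w ≠ 0 ∧ y ∈ Y ∧ a ≠ (0:ℂ) ∧ w = y + a • x := by
    intro x hxL hx0
    obtain ⟨w, hw, hw0⟩ := (Submodule.ne_bot_iff _).mp (hbad x hxL hx0)
    obtain ⟨hwsup, hwΛd⟩ := hw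
    obtain ⟨y, hy, s, hs, rfl⟩ := Submodule.mem_sup.mp hwsup
    obtain ⟨a, rfl⟩ := Submodule.mem_span_singleton.mp hs
    refine ⟨y + a • x, y, a, hwΛd, hw0, hy, ?_, rfl⟩
    rintro rfl
    rw [zero_smul, add_zero] at hwΛd hw0
    have : y ∈ Y ⊓ Λd := ⟨hy, hwΛd⟩
    rw [hY] at this
    exact hw0 this
  -- Step 1 : L ≤ Y ⊔ Λd
  have hLle : L ≤ Y ⊔ Λd := by
    intro x hxL
    by_cases hx0 : x = 0
    · simp [hx0]
    obtain ⟨w, y, a, hwΛd, hw0, hy, ha, hdec⟩ := hwit x hxL hx0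
    have hxr : x = a⁻¹ • (w - y) := by
      rw [hdec, add_sub_cancel_left, smul_smul, inv_mul_cancel₀ ha, one_smul]
    rw [hxr]
    exact Submodule.smul_mem _ _ (sub_mem (Submodule.mem_sup_right hwΛd)
      (Submodule.mem_sup_left hy))
  obtain ⟨C, hYC, hC⟩ := exists_compl_ext Y Λd hY
  set P := Submodule.projectionOnto Λd C hC.symm with hP
  set g : L →ₗ[ℂ] Λd := P ∘ₗ L.subtype with hg
  have hinj : Function.Injective g := by
    rw [← LinearMap.ker_eq_bot, Submodule.eq_bot_iff]
    rintro ⟨x, hxL⟩ hker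
    have hPx : P x = 0 := hker
    have hxC : x ∈ C := (Submodule.linearProjOfIsCompl_apply_eq_zero_iff hC.symm).mp hPx
    ext
    by_contra hx0
    obtain ⟨w, y, a, hwΛd, hw0, hy, ha, hdec⟩ := hwit x hxL hx0
    have hwC : w ∈ C := by
      rw [hdec]
      exact add_mem (hYC hy) (Submodule.smul_mem _ _ hxC)
    have : w = 0 := disjoint_def.mp hC.disjoint w hwC hwΛd
    exact hw0 this
  have hsurj : Function.Surjective g :=
    (LinearMap.injective_iff_surjective_of_finrank_eq_finrank hfin).mp hinj
  apply hn
  intro z hz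
  obtain ⟨x, hx⟩ := hsurj ⟨z, hz⟩
  obtain ⟨y, hy, w, hw, hxd⟩ := Submodule.mem_sup.mp (hLle x.2)
  have hPx : P (x : V) = ⟨w, hw⟩ := by
    rw [← hxd, map_add, Submodule.projectionOnto_apply_of_mem_right hC.symm (hYC hy),
      zero_add]
    exact Submodule.linearProjOfIsCompl_apply_left hC.symm ⟨w, hw⟩
  have hzw : z = w := by
    have h2 : g x = ⟨w, hw⟩ := hPx
    rw [hx] at h2
    exact congrArg Subtype.val h2
  have hzr : z = (x : V) - y := by rw [hzw, ← hxd]; abel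
  rw [hzr]
  exact sub_mem (Submodule.mem_sup_right x.2) (Submodule.mem_sup_left hy)

/-- Let `Λ₁,…,Λ_d ⊂ ℙⁿ` be `(k-1)`-planes satisfying `SP(n-k)`, let `1 ≤ r ≤ d-2`, and let
`p_{r+1} ∈ Λ_{r+1}, …, p_{d-1} ∈ Λ_{d-1}` be points whose linear span is disjoint from `Λ_d`.
Then `Λ_d ⊆ Span(Λ₁,…,Λ_r, p_{r+1},…,p_{d-1})`. -/
theorem sp_span_points {V : Type*} [AddCommGroup V] [Module ℂ V] [FiniteDimensional ℂ V]
    (n k d r : ℕ) (hk : 1 ≤ k) (hkn : k ≤ n) (hr : 1 ≤ r) (hrd : r + 2 ≤ d)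
    (hV : Module.finrank ℂ V = n + 1)
    (Λ : ℕ → Submodule ℂ V)
    (hdim : ∀ i ∈ Finset.Icc 1 d, Module.finrank ℂ (Λ i) = k)
    (hSP : SP (n - k) (Finset.Icc 1 d) Λ)
    (p : ℕ → V)
    (hp0 : ∀ i ∈ Finset.Icc (r + 1) (d - 1), p i ≠ 0)
    (hp : ∀ i ∈ Finset.Icc (r + 1) (d - 1), p i ∈ Λ i)
    (hdisj : Submodule.span ℂ (p '' Set.Icc (r + 1) (d - 1)) ⊓ Λ d = ⊥) :
    Λ d ≤ (⨆ i ∈ Finset.Icc 1 r, Λ i) ⊔ Submodule.span ℂ (p '' Set.Icc (r + 1) (d - 1)) := by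
  by_contra hW
  set U := Submodule.span ℂ (p '' Set.Icc (r + 1) (d - 1)) with hU
  set W := (⨆ i ∈ Finset.Icc 1 r, Λ i) ⊔ U with hWdef
  have hΛW : ∀ i, 1 ≤ i → i ≤ r → Λ i ≤ W := by
    intro i h1 h2
    have : Λ i ≤ ⨆ i ∈ Finset.Icc 1 r, Λ i :=
      le_iSup₂ (f := fun i (_ : i ∈ Finset.Icc 1 r) => Λ i) i (Finset.mem_Icc.mpr ⟨h1, h2⟩)
    exact this.trans le_sup_left
  -- inductive construction of Y
  have main : ∀ j, j ≤ r → ∃ Y : Submodule ℂ V, U ≤ Y ∧ Y ≤ W ∧ Y ⊓ Λ d = ⊥ ∧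
      ∀ i, 1 ≤ i → i ≤ j → Y ⊓ Λ i ≠ ⊥ := by
    intro j
    induction j with
    | zero =>
      intro _
      exact ⟨U, le_rfl, le_sup_right, hdisj, fun i h1 h2 => absurd (h1.trans h2) (by omega)⟩
    | succ j ih =>
      intro hjr
      obtain ⟨Y, hUY, hYW, hYd, hYi⟩ := ih (by omega)
      have hfin : Module.finrank ℂ (Λ (j + 1)) = Module.finrank ℂ (Λ d) := by
        rw [hdim (j + 1) (Finset.mem_Icc.mpr ⟨by omega, by omega⟩),
          hdim d (Finset.mem_Icc.mpr ⟨by omega, le_rfl⟩)]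
      have hn : ¬ Λ d ≤ Y ⊔ Λ (j + 1) := by
        intro h
        exact hW (h.trans (sup_le hYW (hΛW (j + 1) (by omega) (by omega))))
      obtain ⟨x, hxΛ, hx0, hxbot⟩ := key_step Y (Λ (j + 1)) (Λ d) hYd hfin hn
      refine ⟨Y ⊔ Submodule.span ℂ {x}, hUY.trans le_sup_left,
        sup_le hYW ((Submodule.span_le).mpr ?_), hxbot, ?_⟩
      · intro y hy
        rw [Set.mem_singleton_iff] at hy
        subst hy
        exact hΛW (j + 1) (by omega) (by omega) hxΛ
      · intro i h1 h2
        rcases Nat.lt_or_ge i (j + 1) with hlt | hge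
        · intro hbot
          refine hYi i h1 (by omega) ?_
          rw [← le_bot_iff, ← hbot]
          exact inf_le_inf_right _ le_sup_left
        · have hieq : i = j + 1 := by omega
          subst hieq
          rw [Submodule.ne_bot_iff]
          exact ⟨x, ⟨Submodule.mem_sup_right (Submodule.mem_span_singleton_self x), hxΛ⟩, hx0⟩
  obtain ⟨Y, hUY, hYW, hYd, hYi⟩ := main r le_rfl
  obtain ⟨C, hYC, hC⟩ := exists_compl_ext Y (Λ d) hYd
  have hdimC : Module.finrank ℂ C = (n - k) + 1 := by
    have h1 := Submodule.finrank_add_eq_of_isCompl hC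
    rw [hV, hdim d (Finset.mem_Icc.mpr ⟨by omega, le_rfl⟩)] at h1
    omega
  have hmeets : ∀ i ∈ Finset.Icc 1 d, i ≠ d → C ⊓ Λ i ≠ ⊥ := by
    intro i hi hne
    rw [Finset.mem_Icc] at hi
    rcases Nat.lt_or_ge r i with hgt | hle
    · -- r + 1 ≤ i ≤ d - 1
      have hmem : i ∈ Finset.Icc (r + 1) (d - 1) := by
        rw [Finset.mem_Icc]
        omega
      have hpiU : p i ∈ U := Submodule.subset_span
        (Set.mem_image_of_mem p (Set.mem_Icc.mpr ⟨by omega, by omega⟩))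
      rw [Submodule.ne_bot_iff]
      exact ⟨p i, ⟨hYC (hUY hpiU), hp i hmem⟩, hp0 i hmem⟩
    · intro hbot
      refine hYi i hi.1 hle ?_
      rw [← le_bot_iff, ← hbot]
      exact inf_le_inf_right _ hYC
  have := hSP d (Finset.mem_Icc.mpr ⟨by omega, le_rfl⟩) C hdimC hmeets
  exact this (disjoint_iff.mp hC.disjoint)
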